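/- arXiv:1212.4048 — 3 statements merged into one kernel-verified Lean document; each statement's English description precedes it below -/
import Mathlib

section
/- For real numbers a < b and t with t + a > 0, (1/(2π)) ∫_a^b log(x+t)/√((b-x)(x-a)) dx = log((√(t+a)+√(t+b))/2). -/
open MeasureTheory Set Metric
lemma meanvalue {u v : ℝ} (hv : 0 ≤ v) (huv : v < u) :
    ∫ θ in (0:ℝ)..(2*Real.pi), Real.log ‖((u:ℂ) + v * Complex.exp (θ * Complex.I))‖
      = 2 * Real.pi * Real.log u := by
  have hu : 0 < u := lt_of_le_of_lt hv huv
  have hre : ∀ z : ℂ, ‖z‖ ≤ 1 → 0 < ((u:ℂ) + v * z).re := by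
    intro z hz
    have h1 : |z.re| ≤ 1 := le_trans (Complex.abs_re_le_norm z) hz
    have h2 := abs_le.mp h1
    simp only [Complex.add_re, Complex.mul_re, Complex.ofReal_re, Complex.ofReal_im,
      zero_mul, sub_zero]
    nlinarith
  have hslit : ∀ z : ℂ, ‖z‖ ≤ 1 → ((u:ℂ) + v * z) ∈ Complex.slitPlane :=
    fun z hz => Complex.mem_slitPlane_iff.2 (Or.inl (hre z hz))
  have hdiff : DiffContOnCl ℂ (fun z => Complex.log ((u:ℂ) + v * z)) (ball 0 1) := by
    apply DifferentiableOn.diffContOnCl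
    rw [closure_ball (0:ℂ) one_ne_zero]
    intro z hz
    have hz1 : ‖z‖ ≤ 1 := by simpa [Complex.dist_eq] using hz
    exact (DifferentiableAt.clog (f := fun z : ℂ => (u:ℂ) + v * z) (by fun_prop) (hslit z hz1)).differentiableWithinAt
  have key := hdiff.circleIntegral_sub_inv_smul (w := 0) (mem_ball_self one_pos)
  have h2 : (∮ z in C(0,1), (z - 0)⁻¹ • Complex.log ((u:ℂ) + v * z))
      = Complex.I * ∫ θ in (0:ℝ)..2*Real.pi, Complex.log ((u:ℂ) + v * Complex.exp (θ * Complex.I)) := by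
    rw [circleIntegral, ← intervalIntegral.integral_const_mul]
    apply intervalIntegral.integral_congr
    intro θ _
    simp only [deriv_circleMap, circleMap, Complex.ofReal_one, one_mul, Complex.ofReal_zero,
      zero_add, sub_zero, smul_eq_mul]
    field_simp [Complex.exp_ne_zero]
  rw [h2] at key
  have key2 : (∫ θ in (0:ℝ)..2*Real.pi, Complex.log ((u:ℂ) + v * Complex.exp (θ * Complex.I)))
      = 2 * Real.pi * Complex.log u := by
    apply mul_left_cancel₀ Complex.I_ne_zero
    rw [key]
    simp only [mul_zero, add_zero, smul_eq_mul]
    ring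
  have hcont : Continuous fun θ : ℝ => Complex.log ((u:ℂ) + v * Complex.exp (θ * Complex.I)) := by
    apply Continuous.clog (by fun_prop)
    intro θ
    exact hslit _ (by simp [Complex.norm_exp])
  have hint : IntervalIntegrable (fun θ : ℝ => Complex.log ((u:ℂ) + v * Complex.exp (θ * Complex.I)))
      volume 0 (2*Real.pi) := hcont.intervalIntegrable _ _
  have hle : (0:ℝ) ≤ 2*Real.pi := by positivity
  have hre2 : ∫ θ in (0:ℝ)..2*Real.pi, (Complex.log ((u:ℂ) + v * Complex.exp (θ * Complex.I))).re
      = (∫ θ in (0:ℝ)..2*Real.pi, Complex.log ((u:ℂ) + v * Complex.exp (θ * Complex.I))).re := by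
    rw [intervalIntegral.integral_of_le hle, intervalIntegral.integral_of_le hle]
    simp only [← RCLike.re_to_complex]
    exact integral_re hint.1
  calc ∫ θ in (0:ℝ)..(2*Real.pi), Real.log ‖((u:ℂ) + v * Complex.exp (θ * Complex.I))‖
      = ∫ θ in (0:ℝ)..2*Real.pi, (Complex.log ((u:ℂ) + v * Complex.exp (θ * Complex.I))).re := by
        apply intervalIntegral.integral_congr; intro θ _; simp only []; rw [Complex.log_re]
    _ = (∫ θ in (0:ℝ)..2*Real.pi, Complex.log ((u:ℂ) + v * Complex.exp (θ * Complex.I))).re := hre2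
    _ = 2 * Real.pi * Real.log u := by
        rw [key2, ← Complex.ofReal_log hu.le]
        push_cast
        simp

lemma int_log_cos {u v : ℝ} (hv : 0 ≤ v) (huv : v < u) :
    ∫ θ in (0:ℝ)..Real.pi, Real.log (u^2 + v^2 + 2*u*v*Real.cos θ)
      = 2 * Real.pi * Real.log u := by
  have hu : 0 < u := lt_of_le_of_lt hv huv
  have hpos : ∀ θ : ℝ, 0 < u^2 + v^2 + 2*u*v*Real.cos θ := by
    intro θ
    nlinarith [Real.neg_one_le_cos θ, sq_nonneg (u - v),
      mul_nonneg (mul_nonneg hu.le hv) (by linarith [Real.neg_one_le_cos θ] : (0:ℝ) ≤ Real.cos θ + 1)]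
  have habs : ∀ θ : ℝ, u^2 + v^2 + 2*u*v*Real.cos θ
      = (‖((u:ℂ) + v * Complex.exp (θ * Complex.I))‖)^2 := by
    intro θ
    rw [Complex.sq_norm, Complex.normSq_apply]
    simp only [Complex.add_re, Complex.mul_re, Complex.ofReal_re, Complex.ofReal_im,
      Complex.add_im, Complex.mul_im, Complex.exp_ofReal_mul_I_re, Complex.exp_ofReal_mul_I_im,
      zero_mul, sub_zero, add_zero, zero_add]
    have := Real.sin_sq_add_cos_sq θ
    ring_nf
    nlinarith [Real.sin_sq_add_cos_sq θ]
  have hlog : ∀ θ : ℝ, Real.log (u^2 + v^2 + 2*u*v*Real.cos θ)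
      = 2 * Real.log ‖((u:ℂ) + v * Complex.exp (θ * Complex.I))‖ := by
    intro θ
    rw [habs θ, Real.log_pow]
    norm_num
  have hcont : Continuous fun θ : ℝ => Real.log (u^2 + v^2 + 2*u*v*Real.cos θ) :=
    Continuous.log (by fun_prop) fun θ => (hpos θ).ne'
  have hsym : ∫ θ in Real.pi..(2*Real.pi), Real.log (u^2 + v^2 + 2*u*v*Real.cos θ)
      = ∫ θ in (0:ℝ)..Real.pi, Real.log (u^2 + v^2 + 2*u*v*Real.cos θ) := by
    have h := intervalIntegral.integral_comp_sub_left
      (a := (0:ℝ)) (b := Real.pi) (fun θ => Real.log (u^2 + v^2 + 2*u*v*Real.cos θ)) (2*Real.pi)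
    rw [show 2*Real.pi - Real.pi = Real.pi by ring, sub_zero] at h
    rw [← h]
    apply intervalIntegral.integral_congr
    intro θ _
    simp only []
    rw [show Real.cos (2*Real.pi - θ) = Real.cos θ by
      rw [Real.cos_sub, Real.cos_two_pi, Real.sin_two_pi]; ring]
  have hadd := intervalIntegral.integral_add_adjacent_intervals
    (a := (0:ℝ)) (b := Real.pi) (c := 2*Real.pi) (μ := volume)
    (hcont.intervalIntegrable _ _) (hcont.intervalIntegrable _ _)
  have htot : ∫ θ in (0:ℝ)..(2*Real.pi), Real.log (u^2 + v^2 + 2*u*v*Real.cos θ)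
      = 2 * (2 * Real.pi * Real.log u) := by
    calc ∫ θ in (0:ℝ)..(2*Real.pi), Real.log (u^2 + v^2 + 2*u*v*Real.cos θ)
        = ∫ θ in (0:ℝ)..(2*Real.pi),
            2 * Real.log ‖((u:ℂ) + v * Complex.exp (θ * Complex.I))‖ := by
          apply intervalIntegral.integral_congr
          intro θ _
          exact hlog θ
      _ = 2 * ∫ θ in (0:ℝ)..(2*Real.pi),
            Real.log ‖((u:ℂ) + v * Complex.exp (θ * Complex.I))‖ :=
          intervalIntegral.integral_const_mul _ _
      _ = 2 * (2 * Real.pi * Real.log u) := by rw [meanvalue hv huv]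
  have := hadd
  rw [hsym] at this
  linarith [htot, this]

set_option maxHeartbeats 1000000 in
theorem stmt_3 (a b t : ℝ) (hab : a < b) (hta : 0 < t + a) :
    (1 / (2 * Real.pi)) * ∫ x in Set.Ioo a b, Real.log (x + t) / Real.sqrt ((b - x) * (x - a))
      = Real.log ((Real.sqrt (t + a) + Real.sqrt (t + b)) / 2) := by
  set m := (a+b)/2 with hm
  set r := (b-a)/2 with hr
  have hr0 : 0 < r := by rw [hr]; linarith
  set x0 := Real.sqrt (t+a) with hx0def
  set y0 := Real.sqrt (t+b) with hy0def
  have htb : 0 < t + b := by linarith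
  have hx0 : 0 < x0 := Real.sqrt_pos.2 hta
  have hy0 : 0 < y0 := Real.sqrt_pos.2 htb
  have hxy : x0 < y0 := Real.sqrt_lt_sqrt hta.le (by linarith)
  set u := (y0 + x0)/2 with hu
  set v := (y0 - x0)/2 with hv2
  have hv : 0 ≤ v := by rw [hv2]; linarith
  have huv : v < u := by rw [hv2, hu]; linarith
  have hx2 : x0^2 = t+a := Real.sq_sqrt hta.le
  have hy2 : y0^2 = t+b := Real.sq_sqrt htb.le
  have hp : u^2 + v^2 = t + m := by rw [hu, hv2, hm]; nlinarith
  have h2uv : 2*u*v = r := by rw [hu, hv2, hr]; nlinarith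
  have himg : (fun θ => m + r * Real.cos θ) '' Set.Ioo 0 Real.pi = Set.Ioo a b := by
    ext y; constructor
    · rintro ⟨θ, ⟨h0, hπ⟩, rfl⟩
      have h1 : Real.cos θ < Real.cos 0 :=
        Real.strictAntiOn_cos ⟨le_refl 0, Real.pi_pos.le⟩ ⟨h0.le, hπ.le⟩ h0
      have h2 : Real.cos Real.pi < Real.cos θ :=
        Real.strictAntiOn_cos ⟨h0.le, hπ.le⟩ ⟨Real.pi_pos.le, le_refl _⟩ hπ
      rw [Real.cos_zero] at h1; rw [Real.cos_pi] at h2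
      constructor
      · simp only [hm, hr]; nlinarith
      · simp only [hm, hr]; nlinarith
    · intro hy
      have hy1 : -1 < (y - m)/r := by
        rw [lt_div_iff₀ hr0]
        simp only [hm, hr]; nlinarith [hy.1]
      have hy2' : (y - m)/r < 1 := by
        rw [div_lt_one hr0]
        simp only [hm, hr]; nlinarith [hy.2]
      refine ⟨Real.arccos ((y - m)/r), ⟨Real.arccos_pos.2 hy2', by
        rw [Real.arccos, show Real.pi = Real.pi/2 - -(Real.pi/2) by ring]
        have := Real.neg_pi_div_two_lt_arcsin.2 hy1
        linarith⟩, ?_⟩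
      simp only []
      rw [Real.cos_arccos hy1.le hy2'.le]
      field_simp
      ring
  have hderiv : ∀ θ ∈ Set.Ioo (0:ℝ) Real.pi,
      HasDerivWithinAt (fun θ => m + r * Real.cos θ) (r * (-Real.sin θ)) (Set.Ioo 0 Real.pi) θ :=
    fun θ _ => (((Real.hasDerivAt_cos θ).const_mul r).const_add m).hasDerivWithinAt
  have hinj : Set.InjOn (fun θ => m + r * Real.cos θ) (Set.Ioo 0 Real.pi) := by
    intro θ1 h1 θ2 h2 h
    apply Real.injOn_cos (Set.Ioo_subset_Icc_self h1) (Set.Ioo_subset_Icc_self h2)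
    simp only [] at h
    have := mul_left_cancel₀ hr0.ne' (by linarith : r * Real.cos θ1 = r * Real.cos θ2)
    exact this
  have hCoV := MeasureTheory.integral_image_eq_integral_abs_deriv_smul
      measurableSet_Ioo hderiv hinj
      (fun x => Real.log (x + t) / Real.sqrt ((b - x) * (x - a)))
  rw [himg] at hCoV
  have hsimp : Set.EqOn
      (fun θ => |r * (-Real.sin θ)| • (Real.log ((m + r * Real.cos θ) + t) /
        Real.sqrt ((b - (m + r * Real.cos θ)) * ((m + r * Real.cos θ) - a))))
      (fun θ => Real.log (u^2 + v^2 + 2*u*v*Real.cos θ)) (Set.Ioo 0 Real.pi) := by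
    rintro θ ⟨h0, hπ⟩
    have hs : 0 < Real.sin θ := Real.sin_pos_of_pos_of_lt_pi h0 hπ
    simp only []
    have h1 : (b - (m + r * Real.cos θ)) * ((m + r * Real.cos θ) - a) = (r * Real.sin θ)^2 := by
      have hsc : Real.sin θ ^ 2 = 1 - Real.cos θ ^ 2 := by
        nlinarith [Real.sin_sq_add_cos_sq θ]
      have hbm : b - m = r := by rw [hm, hr]; ring
      have hma : m - a = r := by rw [hm, hr]; ring
      linear_combination ((m + r*Real.cos θ) - a) * hbm + (r - r * Real.cos θ) * hma - r^2 * hsc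
    have h2 : (m + r * Real.cos θ) + t = u^2 + v^2 + 2*u*v*Real.cos θ := by
      rw [hp, h2uv]; ring
    rw [h1, h2, Real.sqrt_sq (by positivity), abs_of_nonpos (by nlinarith), smul_eq_mul]
    field_simp
  rw [MeasureTheory.setIntegral_congr_fun measurableSet_Ioo hsimp] at hCoV
  have hIoo : ∫ θ in Set.Ioo (0:ℝ) Real.pi, Real.log (u^2 + v^2 + 2*u*v*Real.cos θ)
      = ∫ θ in (0:ℝ)..Real.pi, Real.log (u^2 + v^2 + 2*u*v*Real.cos θ) := by
    rw [intervalIntegral.integral_of_le Real.pi_pos.le,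
      MeasureTheory.integral_Ioc_eq_integral_Ioo]
  rw [hCoV, hIoo, int_log_cos hv huv]
  rw [show (x0 + y0)/2 = u by rw [hu]; ring]
  field_simp
end

section
/- For real numbers 0 < a < b and t with t + a > 0, (1/(2π)) ∫_a^b x·log(x+t)/√((b-x)(x-a)) dx = (√(t+a) - √(t+b))²/4 + ((a+b)/4)·log(((W(t)+t)² - ab)/(4t)), where W(t) = √((t+a)(t+b)). -/
set_option maxHeartbeats 1000000
open Real MeasureTheory intervalIntegral

lemma logser {ρ : ℝ} (h0 : 0 ≤ ρ) (h1 : ρ < 1) (θ : ℝ) :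
    HasSum (fun n : ℕ => 2 * ((-1)^(n+1) * ρ^n * Real.cos (n*θ) / n))
      (Real.log (1 + 2*ρ*Real.cos θ + ρ^2)) := by
  set z : ℂ := (ρ:ℂ) * Complex.exp (θ * Complex.I) with hz
  have hnz : ‖z‖ < 1 := by
    rw [hz]
    rw [norm_mul, Complex.norm_real, Real.norm_eq_abs,
      Complex.norm_exp_ofReal_mul_I, abs_of_nonneg h0, mul_one]
    exact h1
  have hs := Complex.hasSum_taylorSeries_log hnz
  have hre := hs.mapL Complex.reCLM
  have hterm : ∀ n : ℕ, Complex.reCLM ((-1)^(n+1) * z^n / n)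
      = (-1)^(n+1) * ρ^n * Real.cos (n*θ) / n := by
    intro n
    have key : ((-1:ℂ))^(n+1) * z^n / n
        = ((((-1:ℝ))^(n+1) * ρ^n / n : ℝ) : ℂ) * Complex.exp ((((n:ℝ)*θ : ℝ) : ℂ) * Complex.I) := by
      rw [hz, mul_pow, ← Complex.exp_nat_mul]
      push_cast
      ring_nf
    rw [key, Complex.reCLM_apply, Complex.re_ofReal_mul, Complex.exp_ofReal_mul_I_re]
    push_cast
    ring
  have habs : (Complex.log (1 + z)).re = Real.log ‖1 + z‖ := Complex.log_re _
  have hzre : z.re = ρ * Real.cos θ := by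
    rw [hz, Complex.re_ofReal_mul, Complex.exp_ofReal_mul_I_re]
  have hzim : z.im = ρ * Real.sin θ := by
    rw [hz, Complex.im_ofReal_mul, Complex.exp_ofReal_mul_I_im]
  have hnormsq : ‖1 + z‖ ^ 2 = 1 + 2*ρ*Real.cos θ + ρ^2 := by
    rw [Complex.sq_norm, Complex.normSq_apply, Complex.add_re, Complex.add_im,
      Complex.one_re, Complex.one_im, hzre, hzim]
    nlinarith [Real.sin_sq_add_cos_sq θ]
  have hlog : 2 * (Complex.log (1 + z)).re = Real.log (1 + 2*ρ*Real.cos θ + ρ^2) := by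
    rw [habs, ← hnormsq, Real.log_pow]
    push_cast; ring
  have := (hre.mul_left 2)
  simp only [hterm] at this
  rw [Complex.reCLM_apply] at this
  rwa [hlog] at this

lemma intcos (k : ℕ) : ∫ θ in (0:ℝ)..π, Real.cos ((k+1)*θ) = 0 := by
  have h : ((k:ℝ)+1) ≠ 0 := by positivity
  rw [intervalIntegral.integral_comp_mul_left (fun x => Real.cos x) h]
  rw [integral_cos]
  simp only [Real.sin_zero, mul_zero, sub_zero, smul_eq_mul]
  rw [show ((k:ℝ)+1)*π = ((k+1:ℕ):ℝ)*π by push_cast; ring]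
  rw [Real.sin_nat_mul_pi]
  ring

lemma intcoscos (k : ℕ) : ∫ θ in (0:ℝ)..π, Real.cos θ * Real.cos ((k+1)*θ)
    = if k = 0 then π/2 else 0 := by
  rcases k with _ | j
  · simp only [if_pos rfl, Nat.cast_zero, zero_add, one_mul]
    have : ∀ θ : ℝ, Real.cos θ * Real.cos θ = Real.cos θ ^ 2 := fun θ => (sq _).symm
    simp_rw [this]
    rw [integral_cos_sq]
    simp
  · simp only [Nat.succ_ne_zero, if_false]
    push_cast
    have h : ∀ θ : ℝ, Real.cos θ * Real.cos (((j:ℝ)+1+1)*θ)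
        = (Real.cos (((j:ℝ)+1)*θ) + Real.cos (((j:ℝ)+2+1)*θ)) / 2 := by
      intro θ
      have := Real.two_mul_cos_mul_cos θ (((j:ℝ)+1+1)*θ)
      have e1 : θ - ((j:ℝ)+1+1)*θ = -(((j:ℝ)+1)*θ) := by ring
      have e2 : θ + ((j:ℝ)+1+1)*θ = ((j:ℝ)+2+1)*θ := by ring
      rw [e1, e2, Real.cos_neg] at this
      linarith
    simp_rw [h]
    rw [intervalIntegral.integral_div]
    rw [intervalIntegral.integral_add (by apply Continuous.intervalIntegrable; continuity)
      (by apply Continuous.intervalIntegrable; continuity)]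
    have h1 := intcos j
    have h2 := intcos (j+2)
    push_cast at h2 ⊢
    rw [h1, h2]
    norm_num

lemma contIntOn {f : ℝ → ℝ} (hf : Continuous f) (u v : ℝ) :
    IntegrableOn f (Set.Ioo u v) :=
  (hf.continuousOn.integrableOn_compact isCompact_Icc).mono_set Set.Ioo_subset_Icc_self

lemma keyint {m r c : ℝ} (hr : 0 < r) (hc : r < c) :
    ∫ θ in Set.Ioo 0 π, (m + r*Real.cos θ) * Real.log (c + r*Real.cos θ)
      = π * m * Real.log ((c + Real.sqrt (c^2 - r^2))/2)
        + π * (c - Real.sqrt (c^2 - r^2)) := by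
  set W := Real.sqrt (c^2 - r^2) with hW
  have hc0 : 0 < c := hr.trans hc
  have hWsq : W^2 = c^2 - r^2 := Real.sq_sqrt (by nlinarith)
  have hW0 : 0 ≤ W := Real.sqrt_nonneg _
  have hWc : W < c := by nlinarith
  set ρ := (c - W)/r with hρ
  set A := (c + W)/2 with hA
  have hA0 : 0 < A := by rw [hA]; positivity
  have hρ0 : 0 < ρ := div_pos (by linarith) hr
  have hρ1 : ρ < 1 := by
    rw [hρ, div_lt_one hr]
    nlinarith
  have hAρ : 2 * A * ρ = r := by
    rw [hA, hρ]; field_simp; nlinarith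
  have hA1 : A * (1 + ρ^2) = c := by
    rw [hA, hρ]; field_simp; nlinarith
  have hiden : ∀ θ : ℝ, c + r * Real.cos θ = A * (1 + 2*ρ*Real.cos θ + ρ^2) := by
    intro θ
    linear_combination (-1 : ℝ) * hA1 - Real.cos θ * hAρ
  have hqpos : ∀ θ : ℝ, 0 < 1 + 2*ρ*Real.cos θ + ρ^2 := by
    intro θ
    nlinarith [Real.neg_one_le_cos θ, Real.cos_le_one θ, sq_nonneg (1-ρ), sq_nonneg (1+ρ)]
  have hlogsplit : ∀ θ : ℝ, Real.log (c + r*Real.cos θ)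
      = Real.log A + Real.log (1 + 2*ρ*Real.cos θ + ρ^2) := by
    intro θ
    rw [hiden θ, Real.log_mul hA0.ne' (hqpos θ).ne']
  set F : ℕ → ℝ → ℝ :=
    fun n θ => (m + r*Real.cos θ) * (2 * ((-1)^(n+1) * ρ^n * Real.cos (n*θ) / n)) with hF
  have hpt : ∀ θ : ℝ, HasSum (fun n => F n θ)
      ((m + r*Real.cos θ) * Real.log (1 + 2*ρ*Real.cos θ + ρ^2)) :=
    fun θ => (logser hρ0.le hρ1 θ).mul_left _
  have hFcont : ∀ n, Continuous (F n) := by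
    intro n; rw [hF]; fun_prop
  have hFint : ∀ n, IntegrableOn (F n) (Set.Ioo 0 π) := fun n => contIntOn (hFcont n) 0 π
  have hFbd : ∀ n θ, ‖F n θ‖ ≤ 2*(|m|+r)*ρ^n := by
    intro n θ
    have h1 : |m + r * Real.cos θ| ≤ |m| + r := by
      have h1a : |r * Real.cos θ| ≤ r := by
        rw [abs_mul, abs_of_pos hr]
        nlinarith [Real.abs_cos_le_one θ]
      calc |m + r*Real.cos θ| ≤ |m| + |r*Real.cos θ| := abs_add_le _ _
        _ ≤ |m| + r := by linarith
    have h2 : |(-1:ℝ)^(n+1) * ρ^n * Real.cos ((n:ℝ)*θ) / n| ≤ ρ^n := by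
      rcases Nat.eq_zero_or_pos n with rfl | hn
      · simp
      · rw [abs_div, abs_mul, abs_mul, abs_pow, abs_pow, abs_neg, abs_one, one_pow, one_mul,
          abs_of_nonneg hρ0.le, Nat.abs_cast]
        have hcos := Real.abs_cos_le_one ((n:ℝ)*θ)
        have hn1 : (1:ℝ) ≤ (n:ℝ) := by exact_mod_cast hn
        have hρn : (0:ℝ) ≤ ρ^n := by positivity
        rw [div_le_iff₀ (by linarith)]
        nlinarith [abs_nonneg (Real.cos ((n:ℝ)*θ))]
    calc ‖F n θ‖
        = |m + r*Real.cos θ| * (2 * |(-1:ℝ)^(n+1) * ρ^n * Real.cos ((n:ℝ)*θ) / n|) := by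
          rw [hF]; rw [Real.norm_eq_abs, abs_mul, abs_mul, abs_of_pos (by norm_num : (0:ℝ)<2)]
      _ ≤ (|m|+r) * (2*ρ^n) := by
          apply mul_le_mul h1 (by linarith) (by positivity) (by positivity)
      _ = 2*(|m|+r)*ρ^n := by ring
  have hμ : (volume (Set.Ioo (0:ℝ) π)).toReal = π := by
    rw [Real.volume_Ioo, show π - (0:ℝ) = π by ring, ENNReal.toReal_ofReal Real.pi_pos.le]
  have hnormint : ∀ n, ∫ θ in Set.Ioo (0:ℝ) π, ‖F n θ‖ ≤ π * (2*(|m|+r)*ρ^n) := by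
    intro n
    have h := setIntegral_mono_on (μ := volume) (s := Set.Ioo 0 π)
      (f := fun θ => ‖F n θ‖) (g := fun _ => 2*(|m|+r)*ρ^n)
      ((hFint n).norm)
      (integrableOn_const (by rw [Real.volume_Ioo]; exact ENNReal.ofReal_ne_top))
      measurableSet_Ioo (fun θ _ => hFbd n θ)
    rwa [setIntegral_const, measureReal_def, hμ, smul_eq_mul] at h
  have hsum : Summable (fun n => ∫ θ in Set.Ioo (0:ℝ) π, ‖F n θ‖) := by
    apply Summable.of_nonneg_of_le
      (fun n => integral_nonneg (fun θ => norm_nonneg _)) hnormint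
    exact ((summable_geometric_of_lt_one hρ0.le hρ1).mul_left (π*(2*(|m|+r)))).congr (fun n => by ring)
  have hS := hasSum_integral_of_summable_integral_norm hFint hsum
  have hIoo : ∀ g : ℝ → ℝ, ∫ θ in Set.Ioo (0:ℝ) π, g θ = ∫ θ in (0:ℝ)..π, g θ := by
    intro g
    rw [intervalIntegral.integral_of_le Real.pi_pos.le,
      ← MeasureTheory.integral_Ioc_eq_integral_Ioo]
  have hval : ∀ n, (∫ θ in Set.Ioo (0:ℝ) π, F n θ) = if n = 1 then π*r*ρ else 0 := by
    intro n
    rcases n with _ | k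
    · simp only [hF]
      norm_num
    · have heq : ∀ θ : ℝ, F (k+1) θ
          = (2 * ((-1:ℝ)^(k+1+1) * ρ^(k+1) / (k+1))) *
            (m * Real.cos (((k:ℝ)+1)*θ) + r * (Real.cos θ * Real.cos (((k:ℝ)+1)*θ))) := by
        intro θ; rw [hF]; push_cast; ring
      rw [hIoo, intervalIntegral.integral_congr (fun θ _ => heq θ),
        intervalIntegral.integral_const_mul,
        intervalIntegral.integral_add (by apply Continuous.intervalIntegrable; fun_prop)
          (by apply Continuous.intervalIntegrable; fun_prop),
        intervalIntegral.integral_const_mul, intervalIntegral.integral_const_mul,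
        intcos k, intcoscos k]
      rcases Nat.eq_zero_or_pos k with rfl | hk
      · norm_num; ring
      · rw [if_neg (by omega), if_neg (by omega)]
        norm_num
  have hSval : (∫ θ in Set.Ioo (0:ℝ) π, (∑' n, F n θ)) = π*r*ρ := by
    have h2 : HasSum (fun n => ∫ θ in Set.Ioo (0:ℝ) π, F n θ) (π*r*ρ) := by
      rw [funext hval]
      exact hasSum_ite_eq 1 _
    exact hS.unique h2
  have hsplit : ∀ θ : ℝ, (m + r*Real.cos θ) * Real.log (c + r*Real.cos θ)
      = (m + r*Real.cos θ) * Real.log A + ∑' n, F n θ := by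
    intro θ
    rw [(hpt θ).tsum_eq, hlogsplit θ]
    ring
  rw [setIntegral_congr_fun measurableSet_Ioo (fun θ _ => hsplit θ)]
  have hint1 : IntegrableOn (fun θ => (m + r*Real.cos θ) * Real.log A) (Set.Ioo 0 π) :=
    contIntOn (by fun_prop) 0 π
  have hint2 : IntegrableOn (fun θ => ∑' n, F n θ) (Set.Ioo 0 π) := by
    have h3 : (fun θ : ℝ => ∑' n, F n θ)
        = fun θ => (m + r*Real.cos θ) * Real.log (1 + 2*ρ*Real.cos θ + ρ^2) :=
      funext fun θ => (hpt θ).tsum_eq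
    rw [h3]
    exact contIntOn ((by fun_prop : Continuous fun θ : ℝ => m + r*Real.cos θ).mul
      ((by fun_prop : Continuous fun θ : ℝ => 1 + 2*ρ*Real.cos θ + ρ^2).log
        fun θ => (hqpos θ).ne')) 0 π
  rw [integral_add hint1 hint2, hSval]
  have hfirst : ∫ θ in Set.Ioo (0:ℝ) π, (m + r*Real.cos θ) * Real.log A
      = π * m * Real.log A := by
    rw [hIoo]
    have heq : ∀ θ : ℝ, (m + r*Real.cos θ) * Real.log A
        = m * Real.log A + (r * Real.log A) * Real.cos θ := by intro θ; ring
    rw [intervalIntegral.integral_congr (fun θ _ => heq θ),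
      intervalIntegral.integral_add (by apply Continuous.intervalIntegrable; fun_prop)
        (by apply Continuous.intervalIntegrable; fun_prop),
      intervalIntegral.integral_const, intervalIntegral.integral_const_mul, integral_cos]
    simp
    ring
  rw [hfirst, hA, hρ]
  field_simp

theorem stmt_5 (a b t : ℝ) (ha : 0 < a) (hab : a < b) (ht : 0 < t) :
    (1 / (2 * Real.pi)) *
        ∫ x in Set.Ioo a b, x * Real.log (x + t) / Real.sqrt ((b - x) * (x - a))
      = (Real.sqrt (t + a) - Real.sqrt (t + b)) ^ 2 / 4 +
        ((a + b) / 4) *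
          Real.log (((Real.sqrt ((t + a) * (t + b)) + t) ^ 2 - a * b) / (4 * t)) := by
  set m := (a+b)/2 with hm
  set r := (b-a)/2 with hr'
  set c := m + t with hc'
  have hr : 0 < r := by rw [hr']; linarith
  have hrc : r < c := by rw [hr', hc', hm]; linarith
  set g : ℝ → ℝ := fun θ => m + r * Real.cos θ with hg
  -- image
  have himg : g '' Set.Ioo 0 π = Set.Ioo a b := by
    ext x
    constructor
    · rintro ⟨θ, ⟨h0, hπ⟩, rfl⟩
      have hmem : θ ∈ Set.Icc 0 π := ⟨h0.le, hπ.le⟩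
      have h1 : Real.cos θ < Real.cos 0 :=
        Real.strictAntiOn_cos ⟨le_refl 0, Real.pi_pos.le⟩ hmem h0
      have h2 : Real.cos π < Real.cos θ :=
        Real.strictAntiOn_cos hmem ⟨Real.pi_pos.le, le_refl π⟩ hπ
      rw [Real.cos_zero] at h1
      rw [Real.cos_pi] at h2
      constructor
      · show a < m + r * Real.cos θ
        rw [hm, hr']; nlinarith
      · show m + r * Real.cos θ < b
        rw [hm, hr']; nlinarith
    · rintro ⟨hax, hxb⟩
      have hy1 : -1 < (x - m)/r := by
        rw [lt_div_iff₀ hr, hm, hr']; linarith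
      have hy2 : (x - m)/r < 1 := by
        rw [div_lt_one hr, hm, hr']; linarith
      refine ⟨Real.arccos ((x - m)/r), ⟨?_, ?_⟩, ?_⟩
      · exact Real.arccos_pos.2 hy2
      · have harcsin : -(π/2) < Real.arcsin ((x - m)/r) := by
          rw [Real.lt_arcsin_iff_sin_lt' ⟨le_refl _, by linarith [Real.pi_pos]⟩,
            Real.sin_neg, Real.sin_pi_div_two]
          linarith
        rw [Real.arccos]
        linarith
      · show m + r * Real.cos (Real.arccos ((x - m)/r)) = x
        rw [Real.cos_arccos hy1.le hy2.le]
        field_simp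
        ring
  -- change of variables
  have hderiv : ∀ θ ∈ Set.Ioo (0:ℝ) π,
      HasDerivWithinAt g (r * (-Real.sin θ)) (Set.Ioo 0 π) θ := by
    intro θ _
    exact (((Real.hasDerivAt_cos θ).const_mul r).const_add m).hasDerivWithinAt
  have hinj : Set.InjOn g (Set.Ioo 0 π) := by
    intro θ₁ h1 θ₂ h2 heq
    have : Real.cos θ₁ = Real.cos θ₂ := by
      have := heq
      rw [hg] at this
      simp only at this
      nlinarith [this]
    exact Real.injOn_cos (Set.Ioo_subset_Icc_self h1) (Set.Ioo_subset_Icc_self h2) this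
  have hcv := integral_image_eq_integral_abs_deriv_smul measurableSet_Ioo hderiv hinj
    (fun x => x * Real.log (x + t) / Real.sqrt ((b - x) * (x - a)))
  rw [himg] at hcv
  rw [hcv]
  -- simplify the integrand
  have hsimp : ∀ θ ∈ Set.Ioo (0:ℝ) π,
      |r * (-Real.sin θ)| • (g θ * Real.log (g θ + t) / Real.sqrt ((b - g θ) * (g θ - a)))
        = (m + r * Real.cos θ) * Real.log (c + r * Real.cos θ) := by
    intro θ ⟨h0, hπ⟩
    have hsin : 0 < Real.sin θ := Real.sin_pos_of_pos_of_lt_pi h0 hπ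
    have habs : |r * (-Real.sin θ)| = r * Real.sin θ := by
      rw [abs_mul, abs_neg, abs_of_pos hr, abs_of_pos hsin]
    have hprod : (b - g θ) * (g θ - a) = (r * Real.sin θ)^2 := by
      rw [hg]
      simp only
      have := Real.sin_sq_add_cos_sq θ
      rw [hm, hr']
      linear_combination (-(((b-a)/2)^2)) * this
    have hsqrt : Real.sqrt ((b - g θ) * (g θ - a)) = r * Real.sin θ := by
      rw [hprod, Real.sqrt_sq (by positivity)]
    rw [habs, hsqrt, smul_eq_mul]
    have hgθ : g θ + t = c + r * Real.cos θ := by rw [hg, hc']; ring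
    rw [hgθ]
    have hne : r * Real.sin θ ≠ 0 := by positivity
    field_simp
    simp only [hg]
    ring
  rw [setIntegral_congr_fun measurableSet_Ioo hsimp, keyint hr hrc]
  -- final algebra
  set W := Real.sqrt ((t+a)*(t+b)) with hWdef
  have hta : (0:ℝ) ≤ t + a := by linarith
  have htb : (0:ℝ) ≤ t + b := by linarith
  have hWc2 : c^2 - r^2 = (t+a)*(t+b) := by rw [hc', hm, hr']; ring
  rw [hWc2]
  have hWsq : W^2 = (t+a)*(t+b) := Real.sq_sqrt (by positivity)
  have hW0 : 0 ≤ W := Real.sqrt_nonneg _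
  have hsub : (Real.sqrt (t+a) - Real.sqrt (t+b))^2 = (t+a) + (t+b) - 2*W := by
    have h1 : Real.sqrt (t+a) * Real.sqrt (t+b) = W := (Real.sqrt_mul hta _).symm
    have h2 : Real.sqrt (t+a)^2 = t+a := Real.sq_sqrt hta
    have h3 : Real.sqrt (t+b)^2 = t+b := Real.sq_sqrt htb
    nlinarith [h1, h2, h3]
  have harg : ((W + t)^2 - a*b)/(4*t) = (c + W)/2 := by
    rw [hc', hm]
    field_simp
    nlinarith [hWsq]
  rw [hsub, harg]
  have key : ∀ w l : ℝ, (1 / (2*π)) * (π * m * l + π * (c - w))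
      = ((t + a) + (t + b) - 2*w)/4 + ((a+b)/4) * l := by
    intro w l
    rw [hc', hm]
    field_simp
    ring
  exact key W (Real.log ((c + W)/2))
end

section
/- For real numbers a < b with a + t₁ > 0 and a + t₂ > 0, (1/(2π)) ∫_a^b log(x+t₂)/((x+t₁)√((b-x)(x-a))) dx = (1/(2W(t₁)))·log(((W(t₁)+W(t₂))² - (t₁-t₂)²)/(√(t₁+a)+√(t₁+b))²), where W(t) = √((t+a)(t+b)). -/
open MeasureTheory Real Set

noncomputable def Dk (k θ : ℝ) : ℝ := 1 - 2*k*Real.cos θ + k^2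

lemma Dk_pos {k : ℝ} (hk : |k| < 1) (θ : ℝ) : 0 < Dk k θ := by
  have h3 : 2*k*Real.cos θ ≤ 2*|k| := by
    calc 2*k*Real.cos θ ≤ |2*k*Real.cos θ| := le_abs_self _
    _ = 2 * |k| * |Real.cos θ| := by rw [abs_mul, abs_mul, abs_two]
    _ ≤ 2 * |k| * 1 := by
        have := Real.abs_cos_le_one θ
        nlinarith [abs_nonneg k]
    _ = 2 * |k| := by ring
  have h4 : 0 < (1 - |k|)^2 := by nlinarith
  have h5 : |k|^2 = k^2 := sq_abs k
  unfold Dk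
  nlinarith [sq_nonneg (1 - |k|)]
lemma int_cos_c {c : ℝ} (hc : c ≠ 0) : ∫ θ in (0:ℝ)..π, Real.cos (c*θ) = Real.sin (c*π)/c := by
  have h : ∀ θ ∈ Set.uIcc (0:ℝ) π, HasDerivAt (fun x => Real.sin (c*x)/c) (Real.cos (c*θ)) θ := by
    intro θ _
    have : HasDerivAt (fun x => Real.sin (c*x)) (Real.cos (c*θ) * c) θ := by
      have h1 : HasDerivAt (fun x : ℝ => c*x) c θ := by simpa using (hasDerivAt_id θ).const_mul c
      exact (Real.hasDerivAt_sin (c*θ)).comp θ h1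
    have := this.div_const c
    simpa [mul_div_assoc, mul_div_cancel_right₀ _ hc] using this
  have := intervalIntegral.integral_eq_sub_of_hasDerivAt h
    ((Real.continuous_cos.comp (continuous_const.mul continuous_id)).intervalIntegrable _ _)
  simpa using this

lemma orth (n m : ℕ) : ∫ θ in (0:ℝ)..π, Real.cos (n*θ) * Real.cos (m*θ)
    = if n = m then (if n = 0 then π else π/2) else 0 := by
  have key : ∀ θ:ℝ, Real.cos (n*θ) * Real.cos (m*θ)
      = (Real.cos (((n:ℝ)-m)*θ) + Real.cos (((n:ℝ)+m)*θ))/2 := by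
    intro θ
    rw [show ((n:ℝ)-m)*θ = n*θ - m*θ by ring, show ((n:ℝ)+m)*θ = n*θ + m*θ by ring,
      Real.cos_sub, Real.cos_add]
    ring
  simp_rw [key]
  rw [intervalIntegral.integral_div, intervalIntegral.integral_add
    ((by continuity : Continuous fun θ:ℝ => Real.cos (((n:ℝ)-m)*θ)).intervalIntegrable _ _)
    ((by continuity : Continuous fun θ:ℝ => Real.cos (((n:ℝ)+m)*θ)).intervalIntegrable _ _)]
  by_cases h : n = m
  · subst h
    by_cases h0 : n = 0
    · subst h0; simp
    · have hnm : ((n:ℝ)+n) ≠ 0 := by positivity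
      rw [if_pos rfl, if_neg h0]
      simp only [sub_self, zero_mul, Real.cos_zero]
      rw [int_cos_c hnm]
      have hz : Real.sin (((n:ℝ)+n)*π) = 0 := by
        rw [show ((n:ℝ)+n)*π = ((n+n:ℕ):ℝ)*π by push_cast; ring]
        exact Real.sin_nat_mul_pi (n+n)
      rw [hz]
      simp
  · have hd : ((n:ℝ)-m) ≠ 0 := sub_ne_zero.mpr (by exact_mod_cast h)
    have hs : ((n:ℝ)+m) ≠ 0 := by
      have h' : n ≠ 0 ∨ m ≠ 0 := by
        by_contra hc
        push_neg at hc
        exact h (hc.1.trans hc.2.symm)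
      rcases h' with h'|h' <;> positivity
    rw [int_cos_c hd, int_cos_c hs, if_neg h]
    have e1 : Real.sin (((n:ℝ)-m)*π) = 0 := by
      have := Real.sin_int_mul_pi ((n:ℤ)-m)
      push_cast at this
      convert this using 2
    have e2 : Real.sin (((n:ℝ)+m)*π) = 0 := by
      have := Real.sin_int_mul_pi ((n:ℤ)+m)
      push_cast at this
      convert this using 2
    rw [e1, e2]
    simp

lemma normSq_one_sub_w (k θ : ℝ) :
    Complex.normSq (1 - (k:ℂ) * Complex.exp (θ * Complex.I)) = Dk k θ := by
  have h1 : ((1:ℂ) - (k:ℂ) * Complex.exp (θ * Complex.I)).re = 1 - k * Real.cos θ := by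
    simp [Complex.exp_ofReal_mul_I_re, Complex.exp_re, Complex.exp_im]
  have h2 : ((1:ℂ) - (k:ℂ) * Complex.exp (θ * Complex.I)).im = -(k * Real.sin θ) := by
    simp [Complex.exp_re, Complex.exp_im]
  rw [Complex.normSq_apply, h1, h2]
  have := Real.sin_sq_add_cos_sq θ
  unfold Dk
  nlinarith
lemma w_pow_re (k θ : ℝ) (n : ℕ) :
    (((k:ℂ) * Complex.exp (θ * Complex.I))^n).re = k^n * Real.cos (n*θ) := by
  rw [mul_pow, ← Complex.exp_nat_mul]
  rw [show (n:ℂ) * ((θ:ℝ) * Complex.I) = ((n*θ : ℝ):ℂ) * Complex.I by push_cast; ring]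
  rw [show ((k:ℂ))^n = ((k^n : ℝ):ℂ) by push_cast; rfl]
  rw [Complex.re_ofReal_mul, Complex.exp_ofReal_mul_I_re]

lemma norm_w_lt {k : ℝ} (hk : |k| < 1) (θ : ℝ) : ‖(k:ℂ) * Complex.exp (θ * Complex.I)‖ < 1 := by
  rw [norm_mul, Complex.norm_real]
  rw [show ((θ:ℝ):ℂ) * Complex.I = ((θ:ℝ):ℂ) * Complex.I from rfl]
  rw [Complex.norm_exp_ofReal_mul_I]
  simpa using hk

lemma hasSum_poisson {k : ℝ} (hk : |k| < 1) (θ : ℝ) :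
    HasSum (fun n : ℕ => if n = 0 then (1:ℝ) else 2 * k^n * Real.cos (n*θ))
      ((1-k^2)/Dk k θ) := by
  set w : ℂ := (k:ℂ) * Complex.exp (θ * Complex.I) with hw
  have hwn : ‖w‖ < 1 := norm_w_lt hk θ
  have h1 : HasSum (fun n : ℕ => w^n) (1-w)⁻¹ := hasSum_geometric_of_norm_lt_one hwn
  have h2 : HasSum (fun n : ℕ => (w^n).re) ((1-w)⁻¹).re := Complex.hasSum_re h1
  have h3 := h2.mul_left 2
  have h4 : HasSum (fun n : ℕ => if n = 0 then (1:ℝ) else 0) 1 := hasSum_ite_eq 0 1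
  have h5 := h3.sub h4
  have hD : Dk k θ ≠ 0 := by
    have : 0 < Dk k θ := by
      have h3' : 2*k*Real.cos θ ≤ 2 * |k| := by
        calc 2*k*Real.cos θ ≤ |2*k*Real.cos θ| := le_abs_self _
        _ = 2 * |k| * |Real.cos θ| := by rw [abs_mul, abs_mul, abs_two]
        _ ≤ 2 * |k| * 1 := by have := Real.abs_cos_le_one θ; nlinarith [abs_nonneg k]
        _ = 2 * |k| := by ring
      have h4' : 0 < (1 - |k|)^2 := by nlinarith
      have h5' : |k|^2 = k^2 := sq_abs k
      unfold Dk; nlinarith [sq_nonneg (1 - |k|)]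
    linarith
  have hfun : (fun n : ℕ => if n = 0 then (1:ℝ) else 2 * k^n * Real.cos (n*θ))
      = fun n => 2*(w^n).re - (if n = 0 then (1:ℝ) else 0) := by
    funext n
    rcases n with _|n
    · norm_num
    · rw [if_neg (Nat.succ_ne_zero n), if_neg (Nat.succ_ne_zero n), w_pow_re]
      ring
  rw [hfun]
  convert h5 using 1
  · rfl
  rw [Complex.inv_re, normSq_one_sub_w]
  have hre : ((1:ℂ) - w).re = 1 - k * Real.cos θ := by
    simp [hw, Complex.exp_re, Complex.exp_im]
  rw [hre]
  field_simp
  unfold Dk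
  ring

lemma hasSum_logD {k : ℝ} (hk : |k| < 1) (θ : ℝ) :
    HasSum (fun n : ℕ => -2 * k^n * Real.cos (n*θ) / n) (Real.log (Dk k θ)) := by
  set w : ℂ := (k:ℂ) * Complex.exp (θ * Complex.I) with hw
  have hwn : ‖w‖ < 1 := norm_w_lt hk θ
  have h1 : HasSum (fun n : ℕ => w^n / n) (-Complex.log (1-w)) :=
    Complex.hasSum_taylorSeries_neg_log hwn
  have h2 : HasSum (fun n : ℕ => (w^n / n).re) (-Complex.log (1-w)).re := Complex.hasSum_re h1
  have h3 := h2.mul_left (-2)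
  convert h3 using 1
  · rfl
  · funext n
    have h0 : (w^n / (n:ℂ)).re = (n:ℝ)⁻¹ * (w^n).re := by
      rw [div_eq_inv_mul, show ((n:ℂ))⁻¹ = (((n:ℝ)⁻¹ : ℝ):ℂ) by
        rw [Complex.ofReal_inv, Complex.ofReal_natCast], Complex.re_ofReal_mul]
    rw [h0, w_pow_re]
    ring
  · rw [Complex.neg_re, Complex.log_re]
    rw [show (-2:ℝ) * -Real.log ‖1-w‖ = Real.log (‖1-w‖^2) by
      rw [Real.log_pow]; push_cast; ring]
    rw [Complex.sq_norm, normSq_one_sub_w]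

lemma Dk_cont (k : ℝ) : Continuous (Dk k) := by
  unfold Dk; fun_prop

lemma Dk_ge {k : ℝ} (hk0 : 0 ≤ k) (θ : ℝ) : (1-k)^2 ≤ Dk k θ := by
  have h1 := Real.cos_le_one θ
  unfold Dk; nlinarith

lemma vol_Ioc_pi : (volume (Ioc (0:ℝ) π)).toReal = π := by
  rw [Real.volume_Ioc, ENNReal.toReal_ofReal (by linarith [Real.pi_pos] : (0:ℝ) ≤ π - 0)]
  ring

lemma integral_norm_le {f : ℝ → ℝ} (hf : Integrable f (volume.restrict (Ioc (0:ℝ) π)))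
    {c : ℝ} (hc : ∀ θ ∈ Ioc (0:ℝ) π, ‖f θ‖ ≤ c) :
    ∫ θ in Ioc (0:ℝ) π, ‖f θ‖ ≤ π * c := by
  have h := MeasureTheory.setIntegral_mono_on hf.norm
    (integrableOn_const (by rw [Real.volume_Ioc]; exact ENNReal.ofReal_ne_top))
    measurableSet_Ioc hc
  calc ∫ θ in Ioc (0:ℝ) π, ‖f θ‖ ≤ ∫ _ in Ioc (0:ℝ) π, c := h
  _ = π * c := by rw [setIntegral_const, measureReal_def, vol_Ioc_pi, smul_eq_mul]

lemma integral_cosm_div_D {k : ℝ} (hk0 : 0 ≤ k) (hk : k < 1) (m : ℕ) :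
    ∫ θ in Ioc (0:ℝ) π, Real.cos (m*θ) / Dk k θ = π * k^m / (1-k^2) := by
  have hkabs : |k| < 1 := by rwa [abs_of_nonneg hk0]
  have hDpos : ∀ θ, 0 < Dk k θ := Dk_pos hkabs
  have hk2 : (0:ℝ) < 1 - k^2 := by nlinarith
  set F : ℕ → ℝ → ℝ := fun n θ =>
    (if n = 0 then (1:ℝ) else 2 * k^n * Real.cos (n*θ)) * Real.cos (m*θ) with hF
  have hFcont : ∀ n, Continuous (F n) := by
    intro n
    rcases Nat.eq_zero_or_pos n with h|h
    · subst h
      have : F 0 = fun θ => Real.cos (m*θ) := by funext θ; simp [hF]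
      rw [this]; fun_prop
    · have : F n = fun θ => 2 * k^n * Real.cos (n*θ) * Real.cos (m*θ) := by
        funext θ; simp [hF, Nat.pos_iff_ne_zero.mp h]
      rw [this]; fun_prop
  have hFint : ∀ n, Integrable (F n) (volume.restrict (Ioc (0:ℝ) π)) := fun n =>
    (hFcont n).integrableOn_Ioc
  have hFbound : ∀ n, ∀ θ ∈ Ioc (0:ℝ) π, ‖F n θ‖ ≤ 2 * k^n := by
    intro n θ _
    rcases Nat.eq_zero_or_pos n with h|h
    · subst h
      simp only [hF, if_pos rfl, one_mul, Real.norm_eq_abs]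
      have h2 := Real.abs_cos_le_one ((m:ℝ)*θ)
      norm_num
      linarith
    · simp only [hF, if_neg (Nat.pos_iff_ne_zero.mp h), Real.norm_eq_abs]
      have h1 := Real.abs_cos_le_one ((n:ℝ)*θ)
      have h2 := Real.abs_cos_le_one ((m:ℝ)*θ)
      have hkn : (0:ℝ) ≤ k^n := by positivity
      calc |2 * k^n * Real.cos (n*θ) * Real.cos (m*θ)|
          = 2 * k^n * |Real.cos (n*θ)| * |Real.cos (m*θ)| := by
            rw [abs_mul, abs_mul, abs_mul, abs_two, abs_of_nonneg hkn]
      _ ≤ 2 * k^n * 1 * 1 := by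
            gcongr <;> assumption
      _ = 2 * k^n := by ring
  have hFsum : Summable fun n => ∫ θ in Ioc (0:ℝ) π, ‖F n θ‖ := by
    apply Summable.of_nonneg_of_le
      (fun n => integral_nonneg (fun θ => norm_nonneg _))
      (fun n => integral_norm_le (hFint n) (hFbound n))
    exact ((summable_geometric_of_lt_one hk0 hk).mul_left (π * 2)).congr
      (fun n => by ring)
  have key := MeasureTheory.integral_tsum_of_summable_integral_norm hFint hFsum
  have hIF : ∀ n, ∫ θ in Ioc (0:ℝ) π, F n θ = if n = m then π * k^m else 0 := by
    intro n
    have hset : ∫ θ in Ioc (0:ℝ) π, F n θ = ∫ θ in (0:ℝ)..π, F n θ := by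
      rw [intervalIntegral.integral_of_le Real.pi_pos.le]
    rw [hset]
    rcases Nat.eq_zero_or_pos n with h|h
    · subst h
      have h0 : ∫ θ in (0:ℝ)..π, F 0 θ = ∫ θ in (0:ℝ)..π, Real.cos ((0:ℕ)*θ) * Real.cos (m*θ) := by
        apply intervalIntegral.integral_congr
        intro θ _
        simp [hF]
      rw [h0, orth 0 m]
      rcases Nat.eq_zero_or_pos m with hm|hm
      · subst hm; simp
      · rw [if_neg (Nat.pos_iff_ne_zero.mp hm).symm, if_neg (Nat.pos_iff_ne_zero.mp hm).symm]
    · have h0 : ∫ θ in (0:ℝ)..π, F n θ = 2 * k^n * ∫ θ in (0:ℝ)..π, Real.cos (n*θ) * Real.cos (m*θ) := by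
        rw [← intervalIntegral.integral_const_mul]
        apply intervalIntegral.integral_congr
        intro θ _
        simp only [hF, if_neg (Nat.pos_iff_ne_zero.mp h)]
        ring
      rw [h0, orth n m]
      by_cases hnm : n = m
      · subst hnm
        rw [if_pos rfl, if_pos rfl, if_neg (Nat.pos_iff_ne_zero.mp h)]
        ring
      · rw [if_neg hnm, if_neg hnm]
        ring
  have hts : (∑' n, ∫ θ in Ioc (0:ℝ) π, F n θ) = π * k^m := by
    rw [tsum_congr hIF]
    exact tsum_ite_eq m (fun _ => π * k^m)
  rw [hts] at key
  have key2 : ∫ θ in Ioc (0:ℝ) π, (1-k^2) * (Real.cos (m*θ) / Dk k θ) = π * k^m := by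
    rw [key]
    apply setIntegral_congr_fun measurableSet_Ioc
    intro θ _
    show (1-k^2) * (Real.cos (m*θ) / Dk k θ) = ∑' i, F i θ
    rw [((hasSum_poisson hkabs θ).mul_right (Real.cos (m*θ))).tsum_eq]
    ring
  rw [MeasureTheory.integral_const_mul] at key2
  rw [eq_div_iff hk2.ne']
  linarith [key2]

lemma integral_logD_div_D {k₁ k₂ : ℝ} (h10 : 0 ≤ k₁) (h1 : k₁ < 1)
    (h20 : 0 ≤ k₂) (h2 : k₂ < 1) :
    ∫ θ in Ioc (0:ℝ) π, Real.log (Dk k₂ θ) / Dk k₁ θ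
      = π * Real.log ((1 - k₁*k₂)^2) / (1-k₁^2) := by
  have h1abs : |k₁| < 1 := by rwa [abs_of_nonneg h10]
  have h2abs : |k₂| < 1 := by rwa [abs_of_nonneg h20]
  have hD1pos : ∀ θ, 0 < Dk k₁ θ := Dk_pos h1abs
  have hk2 : (0:ℝ) < 1 - k₁^2 := by nlinarith
  have hge : ∀ θ, (1-k₁)^2 ≤ Dk k₁ θ := Dk_ge h10
  have hgpos : (0:ℝ) < (1-k₁)^2 := by nlinarith
  set G : ℕ → ℝ → ℝ := fun n θ => (-2 * k₂^n * Real.cos (n*θ) / n) / Dk k₁ θ with hG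
  have hGcont : ∀ n, Continuous (G n) := by
    intro n
    apply Continuous.div (by fun_prop) (Dk_cont k₁) (fun θ => (hD1pos θ).ne')
  have hGint : ∀ n, Integrable (G n) (volume.restrict (Ioc (0:ℝ) π)) := fun n =>
    (hGcont n).integrableOn_Ioc
  have hGbound : ∀ n, ∀ θ ∈ Ioc (0:ℝ) π, ‖G n θ‖ ≤ (2/(1-k₁)^2) * k₂^n := by
    intro n θ _
    rcases Nat.eq_zero_or_pos n with h|h
    · subst h
      simp [hG]
      positivity
    · have hcos := Real.abs_cos_le_one ((n:ℝ)*θ)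
      have hn1 : (1:ℝ) ≤ (n:ℝ) := by exact_mod_cast h
      have hkn : (0:ℝ) ≤ k₂^n := by positivity
      have hnum : |(-2 * k₂^n * Real.cos (n*θ) / n)| ≤ 2 * k₂^n := by
        rw [abs_div, abs_mul, abs_mul, abs_of_nonneg hkn, Nat.abs_cast,
          show |(-2:ℝ)| = 2 by norm_num]
        rw [div_le_iff₀ (by linarith)]
        nlinarith [abs_nonneg (Real.cos ((n:ℝ)*θ))]
      simp only [hG, Real.norm_eq_abs]
      rw [abs_div, abs_of_pos (hD1pos θ)]
      calc |(-2 * k₂^n * Real.cos (n*θ) / n)| / Dk k₁ θ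
          ≤ (2 * k₂^n) / (1-k₁)^2 := div_le_div₀ (by positivity) hnum hgpos (hge θ)
      _ = (2/(1-k₁)^2) * k₂^n := by ring
  have hGsum : Summable fun n => ∫ θ in Ioc (0:ℝ) π, ‖G n θ‖ := by
    apply Summable.of_nonneg_of_le
      (fun n => integral_nonneg (fun θ => norm_nonneg _))
      (fun n => integral_norm_le (hGint n) (hGbound n))
    exact ((summable_geometric_of_lt_one h20 h2).mul_left (π * (2/(1-k₁)^2))).congr
      (fun n => by ring)
  have key := MeasureTheory.integral_tsum_of_summable_integral_norm hGint hGsum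
  have hIG : ∀ n, ∫ θ in Ioc (0:ℝ) π, G n θ
      = (-2 * (k₁*k₂)^n * Real.cos ((n:ℝ)*0) / n) * (π / (1-k₁^2)) := by
    intro n
    have h0 : ∫ θ in Ioc (0:ℝ) π, G n θ
        = (-2 * k₂^n / n) * ∫ θ in Ioc (0:ℝ) π, Real.cos (n*θ) / Dk k₁ θ := by
      rw [← MeasureTheory.integral_const_mul]
      apply setIntegral_congr_fun measurableSet_Ioc
      intro θ _
      show G n θ = -2 * k₂^n / n * (Real.cos (n*θ) / Dk k₁ θ)
      simp only [hG]
      ring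
    rw [h0, integral_cosm_div_D h10 h1 n, mul_zero, Real.cos_zero, mul_pow]
    ring
  have hlogsum : HasSum (fun n : ℕ => (-2 * (k₁*k₂)^n * Real.cos ((n:ℝ)*0) / n) * (π / (1-k₁^2)))
      (Real.log (Dk (k₁*k₂) 0) * (π / (1-k₁^2))) := by
    apply (hasSum_logD (k := k₁*k₂) ?_ 0).mul_right
    rw [abs_of_nonneg (by positivity)]
    nlinarith
  have hts : (∑' n, ∫ θ in Ioc (0:ℝ) π, G n θ)
      = Real.log (Dk (k₁*k₂) 0) * (π / (1-k₁^2)) := by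
    rw [tsum_congr hIG]
    exact hlogsum.tsum_eq
  rw [hts] at key
  have hDval : Dk (k₁*k₂) 0 = (1 - k₁*k₂)^2 := by
    unfold Dk
    rw [Real.cos_zero]
    ring
  rw [hDval] at key
  have : ∫ θ in Ioc (0:ℝ) π, Real.log (Dk k₂ θ) / Dk k₁ θ = ∫ a in Ioc (0:ℝ) π, ∑' i, G i a := by
    apply setIntegral_congr_fun measurableSet_Ioc
    intro θ _
    show Real.log (Dk k₂ θ) / Dk k₁ θ = ∑' i, G i θ
    exact ((hasSum_logD h2abs θ).div_const (Dk k₁ θ)).tsum_eq.symm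
  rw [this, ← key]
  ring

lemma subst_lemma {a b : ℝ} (hab : a < b) (g : ℝ → ℝ) :
    ∫ x in Ioo a b, g x
      = ∫ θ in Ioo (0:ℝ) π, ((b-a)/2 * Real.sin θ) • g ((a+b)/2 - (b-a)/2 * Real.cos θ) := by
  set r := (b-a)/2 with hr
  set c := (a+b)/2 with hc
  have hrpos : 0 < r := by simp only [hr]; linarith
  set f : ℝ → ℝ := fun θ => c - r * Real.cos θ with hf
  have hcont : Continuous f := by fun_prop
  have hf0 : f 0 = a := by simp [hf, hc, hr]; ring
  have hfpi : f π = b := by simp [hf, Real.cos_pi, hc, hr]; ring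
  have hderiv : ∀ θ ∈ Ioo (0:ℝ) π, HasDerivWithinAt f (r * Real.sin θ) (Ioo (0:ℝ) π) θ := by
    intro θ _
    have h1 : HasDerivAt (fun θ : ℝ => c - r * Real.cos θ) (-(r * -Real.sin θ)) θ :=
      ((Real.hasDerivAt_cos θ).const_mul r).const_sub c
    simpa using h1.hasDerivWithinAt
  have hinj : InjOn f (Ioo (0:ℝ) π) := by
    intro x hx y hy hxy
    have hcx : Real.cos x = Real.cos y := by
      have : r * Real.cos x = r * Real.cos y := by
        simp only [hf] at hxy; linarith
      exact mul_left_cancel₀ hrpos.ne' this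
    exact Real.injOn_cos ⟨hx.1.le, hx.2.le⟩ ⟨hy.1.le, hy.2.le⟩ hcx
  have himg : f '' Ioo (0:ℝ) π = Ioo a b := by
    apply Subset.antisymm
    · rintro x ⟨θ, hθ, rfl⟩
      have hc1 : Real.cos θ < 1 := by
        have := Real.strictAntiOn_cos (left_mem_Icc.mpr Real.pi_pos.le)
          ⟨hθ.1.le, hθ.2.le⟩ hθ.1
        simpa using this
      have hc2 : -1 < Real.cos θ := by
        have := Real.strictAntiOn_cos ⟨hθ.1.le, hθ.2.le⟩
          (right_mem_Icc.mpr Real.pi_pos.le) hθ.2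
        simpa using this
      constructor
      · simp only [hf, hc, hr] at *; nlinarith
      · simp only [hf, hc, hr] at *; nlinarith
    · have := intermediate_value_Ioo (le_of_lt Real.pi_pos) hcont.continuousOn
      rwa [hf0, hfpi] at this
  rw [← himg, integral_image_eq_integral_abs_deriv_smul measurableSet_Ioo hderiv hinj g]
  apply setIntegral_congr_fun measurableSet_Ioo
  intro θ hθ
  have hsin : 0 < Real.sin θ := Real.sin_pos_of_pos_of_lt_pi hθ.1 hθ.2
  show |r * Real.sin θ| • g (f θ) = (r * Real.sin θ) • g (c - r * Real.cos θ)
  rw [abs_of_pos (by positivity : (0:ℝ) < r * Real.sin θ)]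

lemma integral_one_div_D {k : ℝ} (hk0 : 0 ≤ k) (hk : k < 1) :
    ∫ θ in Ioc (0:ℝ) π, 1 / Dk k θ = π / (1-k^2) := by
  have := integral_cosm_div_D hk0 hk 0
  simpa using this

lemma alg_key {r p₁ p₂ W₁ W₂ : ℝ} (h1 : W₁^2 = p₁^2 - r^2) (h2 : W₂^2 = p₂^2 - r^2) :
    (r^2 - (p₁-W₁)*(p₂-W₂))^2 * (p₁+W₁)
      = (p₁*p₂ - r^2 + W₁*W₂) * (2*(p₂-W₂)*r^2) := by
  linear_combination (W₁*W₂^2 - 2*p₂*W₁*W₂ + p₂^2*W₁ - p₁*W₂^2 + 2*p₁*p₂*W₂ - p₁*p₂^2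
      - 2*r^2*W₂ + 2*r^2*p₂) * h1 + (r^2*W₁ + r^2*p₁) * h2

set_option maxHeartbeats 1000000 in
theorem stmt_7 (a b t₁ t₂ : ℝ) (hab : a < b) (h₁ : 0 < t₁ + a) (h₂ : 0 < t₂ + a) :
    (1 / (2 * Real.pi)) *
        ∫ x in Set.Ioo a b, Real.log (x + t₂) / ((x + t₁) * Real.sqrt ((b - x) * (x - a)))
      = (1 / (2 * Real.sqrt ((t₁ + a) * (t₁ + b)))) *
          Real.log (((Real.sqrt ((t₁ + a) * (t₁ + b)) + Real.sqrt ((t₂ + a) * (t₂ + b))) ^ 2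
              - (t₁ - t₂) ^ 2) /
            (Real.sqrt (t₁ + a) + Real.sqrt (t₁ + b)) ^ 2) := by
  have h₁b : 0 < t₁ + b := by linarith
  have h₂b : 0 < t₂ + b := by linarith
  set r : ℝ := (b-a)/2 with hrdef
  set c : ℝ := (a+b)/2 with hcdef
  have hrpos : 0 < r := by rw [hrdef]; linarith
  set p₁ : ℝ := c + t₁ with hp1def
  set p₂ : ℝ := c + t₂ with hp2def
  have hp1r : r < p₁ := by rw [hp1def, hcdef, hrdef]; linarith
  have hp2r : r < p₂ := by rw [hp2def, hcdef, hrdef]; linarith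
  set W₁ : ℝ := Real.sqrt ((t₁+a)*(t₁+b)) with hW1def
  set W₂ : ℝ := Real.sqrt ((t₂+a)*(t₂+b)) with hW2def
  have hW1sq : W₁^2 = p₁^2 - r^2 := by
    rw [hW1def, Real.sq_sqrt (by positivity), hp1def, hcdef, hrdef]; ring
  have hW2sq : W₂^2 = p₂^2 - r^2 := by
    rw [hW2def, Real.sq_sqrt (by positivity), hp2def, hcdef, hrdef]; ring
  have hW1pos : 0 < W₁ := Real.sqrt_pos.mpr (by positivity)
  have hW2pos : 0 < W₂ := Real.sqrt_pos.mpr (by positivity)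
  have hW1lt : W₁ < p₁ := by nlinarith
  have hW2lt : W₂ < p₂ := by nlinarith
  have hW1gt : p₁ - r < W₁ := by nlinarith
  have hW2gt : p₂ - r < W₂ := by nlinarith
  set k₁ : ℝ := (p₁ - W₁)/r with hk1def
  set k₂ : ℝ := (p₂ - W₂)/r with hk2def
  have hk1r : k₁ * r = p₁ - W₁ := by rw [hk1def]; field_simp
  have hk2r : k₂ * r = p₂ - W₂ := by rw [hk2def]; field_simp
  have hk1pos : 0 < k₁ := div_pos (by linarith) hrpos
  have hk2pos : 0 < k₂ := div_pos (by linarith) hrpos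
  have hk1lt : k₁ < 1 := by rw [hk1def, div_lt_one hrpos]; linarith
  have hk2lt : k₂ < 1 := by rw [hk2def, div_lt_one hrpos]; linarith
  have h2kp1 : 2*k₁*p₁ = r*(1+k₁^2) := by
    apply mul_right_cancel₀ hrpos.ne'
    linear_combination (2*p₁ - (k₁*r) - (p₁ - W₁)) * hk1r - hW1sq
  have h2kp2 : 2*k₂*p₂ = r*(1+k₂^2) := by
    apply mul_right_cancel₀ hrpos.ne'
    linear_combination (2*p₂ - (k₂*r) - (p₂ - W₂)) * hk2r - hW2sq
  have hB1 : 2*k₁*W₁ = r*(1-k₁^2) := by linear_combination 2*k₁*hk1r + h2kp1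
  have hA1 : ∀ θ, p₁ - r*Real.cos θ = (r/(2*k₁)) * Dk k₁ θ := by
    intro θ
    have h' : 2*k₁*(p₁ - r*Real.cos θ) = r * Dk k₁ θ := by
      unfold Dk; linear_combination h2kp1
    field_simp
    linear_combination h'
  have hA2 : ∀ θ, p₂ - r*Real.cos θ = (r/(2*k₂)) * Dk k₂ θ := by
    intro θ
    have h' : 2*k₂*(p₂ - r*Real.cos θ) = r * Dk k₂ θ := by
      unfold Dk; linear_combination h2kp2
    field_simp
    linear_combination h'
  have hDk1pos : ∀ θ, 0 < Dk k₁ θ := Dk_pos (by rw [abs_of_pos hk1pos]; exact hk1lt)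
  have hDk2pos : ∀ θ, 0 < Dk k₂ θ := Dk_pos (by rw [abs_of_pos hk2pos]; exact hk2lt)
  -- step 1 : substitution
  rw [subst_lemma hab]
  -- step 2 : simplify integrand on Ioo
  have hstep2 : ∫ θ in Ioo (0:ℝ) π, ((b-a)/2 * Real.sin θ) •
        (Real.log (((a+b)/2 - (b-a)/2 * Real.cos θ) + t₂) /
          ((((a+b)/2 - (b-a)/2 * Real.cos θ) + t₁) *
            Real.sqrt ((b - ((a+b)/2 - (b-a)/2 * Real.cos θ)) * (((a+b)/2 - (b-a)/2 * Real.cos θ) - a))))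
      = ∫ θ in Ioo (0:ℝ) π, Real.log (p₂ - r*Real.cos θ) / (p₁ - r*Real.cos θ) := by
    apply setIntegral_congr_fun measurableSet_Ioo
    intro θ hθ
    have hsin : 0 < Real.sin θ := Real.sin_pos_of_pos_of_lt_pi hθ.1 hθ.2
    have hsq : (b - ((a+b)/2 - (b-a)/2 * Real.cos θ)) * (((a+b)/2 - (b-a)/2 * Real.cos θ) - a)
        = (r * Real.sin θ)^2 := by
      have hpy := Real.sin_sq_add_cos_sq θ
      rw [hrdef]
      linear_combination (-((b-a)/2)^2) * hpy
    have hden1 : 0 < p₁ - r*Real.cos θ := by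
      have hc1 := Real.cos_le_one θ
      have : r*Real.cos θ ≤ r := by nlinarith
      linarith
    show ((b-a)/2 * Real.sin θ) • _ = _
    rw [hsq, Real.sqrt_sq (by positivity)]
    rw [smul_eq_mul]
    rw [show ((a+b)/2 - (b-a)/2 * Real.cos θ) + t₂ = p₂ - r*Real.cos θ by
      rw [hp2def, hcdef, hrdef]; ring]
    rw [show ((a+b)/2 - (b-a)/2 * Real.cos θ) + t₁ = p₁ - r*Real.cos θ by
      rw [hp1def, hcdef, hrdef]; ring]
    rw [show (b-a)/2 = r from hrdef.symm]
    field_simp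
  rw [hstep2, ← integral_Ioc_eq_integral_Ioo]
  -- step 4 : rewrite integrand via Dk
  have hstep4 : ∫ θ in Ioc (0:ℝ) π, Real.log (p₂ - r*Real.cos θ) / (p₁ - r*Real.cos θ)
      = ∫ θ in Ioc (0:ℝ) π,
          ((2*k₁/r) * Real.log (r/(2*k₂))) * (1 / Dk k₁ θ)
            + (2*k₁/r) * (Real.log (Dk k₂ θ) / Dk k₁ θ) := by
    apply setIntegral_congr_fun measurableSet_Ioc
    intro θ _
    show Real.log (p₂ - r*Real.cos θ) / (p₁ - r*Real.cos θ) = _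
    rw [hA2 θ, hA1 θ, Real.log_mul (by positivity) (hDk2pos θ).ne']
    field_simp
  rw [hstep4]
  -- step 5 : split and evaluate
  have hint1 : IntegrableOn (fun θ => ((2*k₁/r) * Real.log (r/(2*k₂))) * (1 / Dk k₁ θ))
      (Ioc (0:ℝ) π) volume := by
    apply Continuous.integrableOn_Ioc
    exact continuous_const.mul (continuous_const.div (Dk_cont k₁) (fun θ => (hDk1pos θ).ne'))
  have hint2 : IntegrableOn (fun θ => (2*k₁/r) * (Real.log (Dk k₂ θ) / Dk k₁ θ))
      (Ioc (0:ℝ) π) volume := by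
    apply Continuous.integrableOn_Ioc
    exact continuous_const.mul (Continuous.div ((Dk_cont k₂).log (fun θ => (hDk2pos θ).ne'))
      (Dk_cont k₁) (fun θ => (hDk1pos θ).ne'))
  rw [MeasureTheory.integral_add hint1 hint2,
    MeasureTheory.integral_const_mul, MeasureTheory.integral_const_mul,
    integral_one_div_D hk1pos.le hk1lt, integral_logD_div_D hk1pos.le hk1lt hk2pos.le hk2lt]
  -- step 6 : final algebra
  have hk1k2 : k₁ * k₂ < 1 := by nlinarith
  have h1k : (0:ℝ) < 1 - k₁*k₂ := by linarith
  have hfrac : (0:ℝ) < 1 - k₁^2 := by nlinarith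
  have hXpos : (0:ℝ) < r/(2*k₂) := by positivity
  -- the log arguments agree
  have hN : (W₁ + W₂)^2 - (t₁ - t₂)^2 = 2*(p₁*p₂ - r^2 + W₁*W₂) := by
    have ht : t₁ - t₂ = p₁ - p₂ := by rw [hp1def, hp2def]; ring
    rw [ht]
    linear_combination hW1sq + hW2sq
  have hDden : (Real.sqrt (t₁+a) + Real.sqrt (t₁+b))^2 = 2*(p₁ + W₁) := by
    have hs1 : Real.sqrt (t₁+a)^2 = t₁+a := Real.sq_sqrt h₁.le
    have hs2 : Real.sqrt (t₁+b)^2 = t₁+b := Real.sq_sqrt h₁b.le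
    have hs12 : Real.sqrt (t₁+a) * Real.sqrt (t₁+b) = W₁ := by
      rw [hW1def, ← Real.sqrt_mul h₁.le]
    have hp : p₁ = (a+b)/2 + t₁ := by rw [hp1def, hcdef]
    linear_combination hs1 + hs2 + 2*hs12 + 2*hp
  have harg : (r/(2*k₂)) * (1-k₁*k₂)^2
      = (((W₁ + W₂)^2 - (t₁-t₂)^2) / ((Real.sqrt (t₁+a) + Real.sqrt (t₁+b))^2)) := by
    rw [hN, hDden]
    rw [show (r/(2*k₂)) * (1-k₁*k₂)^2 = (r * (1-k₁*k₂)^2)/(2*k₂) by ring]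
    rw [div_eq_div_iff (by positivity : (0:ℝ) < 2*k₂).ne' (by linarith : (0:ℝ) < 2*(p₁+W₁)).ne']
    apply mul_right_cancel₀ (pow_ne_zero 3 hrpos.ne')
    linear_combination
      (-4*k₂*r^3*W₁ - 4*k₂*r^3*p₁ - 2*k₂^2*r^2*W₁^2 + 2*k₂^2*r^2*p₁^2 + 2*k₁*k₂^2*r^3*W₁
        + 2*k₁*k₂^2*r^3*p₁) * hk1r
      + (-2*W₁^3*W₂ + 2*p₂*W₁^3 + 2*p₁*W₁^2*W₂ - 2*p₁*p₂*W₁^2 + 2*p₁^2*W₁*W₂ - 2*p₁^2*p₂*W₁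
        - 2*p₁^3*W₂ + 2*p₁^3*p₂ - 4*r^2*W₁*W₂ + 4*r^2*W₁^2 - 4*r^2*p₁*p₂ - 4*r^2*p₁^2 + 4*r^4
        + 2*k₂*r*W₁^3 - 2*k₂*r*p₁*W₁^2 - 2*k₂*r*p₁^2*W₁ + 2*k₂*r*p₁^3) * hk2r
      + (2*W₁*W₂^2 - 4*p₂*W₁*W₂ + 2*p₂^2*W₁ - 2*p₁*W₂^2 + 4*p₁*p₂*W₂ - 2*p₁*p₂^2 - 4*r^2*W₂
        + 4*r^2*p₂) * hW1sq
      + (2*r^2*W₁ + 2*r^2*p₁) * hW2sq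
  rw [← harg]
  rw [Real.log_mul hXpos.ne' (by positivity), Real.log_pow]
  have hpi := Real.pi_pos
  have hBval : 1 - k₁^2 = 2*k₁*W₁/r := by
    rw [eq_div_iff hrpos.ne']
    linear_combination -hB1
  rw [hBval]
  field_simp
end
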